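/- With notation as in the previous statement, the sign of the permutation sorting ι_λ(S^inv) is (−1)^{|S| + Σ(S)}, where S^inv = {m+1−s : s ∈ S}. -/

import Mathlib

/-- `Int.sign` as a monoid hom. -/
def intSignHom : ℤ →* ℤ where
  toFun := Int.sign
  map_one' := Int.sign_one
  map_mul' := Int.sign_mul

/-- Sign of the permutation sorting `ι_λ(S^inv)`, where `S^inv = {m+1−s : s ∈ S}`:
it equals `(−1)^{|S| + Σ(S)}`. -/
theorem stmt7 (m : ℕ) (lam : Fin m → ℤ)
    (ha : StrictAnti fun j : Fin m => lam j + ((m : ℤ) - (j : ℕ)))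
    (hpos : ∀ j : Fin m, 0 < lam j + ((m : ℤ) - (j : ℕ)))
    (S : Finset (Fin m)) (σ : Equiv.Perm (Fin m))
    (hσ : StrictAnti fun j : Fin m =>
      if σ j ∈ S.image Fin.rev then -(lam (σ j) + ((m : ℤ) - ((σ j : ℕ))))
      else lam (σ j) + ((m : ℤ) - ((σ j : ℕ)))) :
    Equiv.Perm.sign σ = (-1 : ℤˣ) ^ (S.card + ∑ s ∈ S, ((s : ℕ) + 1)) := by
  classical
  set T : Finset (Fin m) := S.image Fin.rev with hT
  set μ : Fin m → ℤ := fun j => lam j + ((m : ℤ) - (j : ℕ)) with hμ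
  set v : Fin m → ℤ := fun j => if j ∈ T then -μ j else μ j with hv
  have hσ' : StrictAnti fun j => v (σ j) := hσ
  -- Vandermonde determinant identity
  have key : (∏ i : Fin m, ∏ j ∈ Finset.Ioi i, (v (σ j) - v (σ i)))
      = (Equiv.Perm.sign σ : ℤ) * ∏ i : Fin m, ∏ j ∈ Finset.Ioi i, (v j - v i) := by
    have h1 := Matrix.det_permute σ (Matrix.vandermonde v)
    have h2 : ((Matrix.vandermonde v).submatrix (⇑σ) id).det
        = (Matrix.vandermonde fun i => v (σ i)).det := rfl
    rw [h2, Matrix.det_vandermonde, Matrix.det_vandermonde] at h1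
    rw [h1]; norm_num
  -- sign of the left product
  have L : intSignHom (∏ i : Fin m, ∏ j ∈ Finset.Ioi i, (v (σ j) - v (σ i)))
      = (-1 : ℤ) ^ (∑ i : Fin m, (Finset.Ioi i).card) := by
    rw [map_prod]
    rw [Finset.prod_congr rfl (fun i _ => map_prod intSignHom _ _)]
    have hneg : ∀ i : Fin m, ∀ j ∈ Finset.Ioi i, intSignHom (v (σ j) - v (σ i)) = -1 := by
      intro i j hj
      have hij : i < j := Finset.mem_Ioi.mp hj
      have hlt := hσ' hij
      show Int.sign _ = -1
      exact Int.sign_eq_neg_one_of_neg (by simpa using sub_neg.mpr hlt)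
    rw [Finset.prod_congr rfl (fun i _ => Finset.prod_congr rfl (hneg i))]
    rw [Finset.prod_congr rfl (fun i _ => Finset.prod_const _)]
    rw [Finset.prod_pow_eq_pow_sum]
  -- sign of the right product
  have R : intSignHom (∏ i : Fin m, ∏ j ∈ Finset.Ioi i, (v j - v i))
      = (-1 : ℤ) ^ (∑ i ∈ Finset.univ.filter (fun i => i ∉ T), (Finset.Ioi i).card) := by
    rw [map_prod]
    rw [Finset.prod_congr rfl (fun i _ => map_prod intSignHom _ _)]
    have hfac : ∀ i : Fin m, ∀ j ∈ Finset.Ioi i,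
        intSignHom (v j - v i) = if i ∈ T then 1 else -1 := by
      intro i j hj
      have hij : i < j := Finset.mem_Ioi.mp hj
      have hlt : μ j < μ i := ha hij
      have hpi : 0 < μ i := hpos i
      have hpj : 0 < μ j := hpos j
      show Int.sign (v j - v i) = if i ∈ T then 1 else -1
      by_cases hi : i ∈ T <;> by_cases hjT : j ∈ T <;>
        simp only [hv, hi, hjT, if_true, if_false, ite_true, ite_false]
      · exact Int.sign_eq_one_of_pos (by linarith)
      · exact Int.sign_eq_one_of_pos (by linarith)
      · exact Int.sign_eq_neg_one_of_neg (by linarith)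
      · exact Int.sign_eq_neg_one_of_neg (by linarith)
    rw [Finset.prod_congr rfl (fun i _ => Finset.prod_congr rfl (hfac i))]
    rw [Finset.prod_congr rfl (fun i _ => Finset.prod_const _)]
    rw [← Finset.prod_filter_mul_prod_filter_not Finset.univ (fun i => i ∈ T)]
    have h1 : ∏ i ∈ Finset.univ.filter (fun i => i ∈ T),
        (if i ∈ T then (1:ℤ) else -1) ^ (Finset.Ioi i).card = 1 := by
      apply Finset.prod_eq_one
      intro i hi
      rw [Finset.mem_filter] at hi
      simp [hi.2]
    have h2 : ∏ i ∈ Finset.univ.filter (fun i => i ∉ T),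
        (if i ∈ T then (1:ℤ) else -1) ^ (Finset.Ioi i).card
        = (-1 : ℤ) ^ (∑ i ∈ Finset.univ.filter (fun i => i ∉ T), (Finset.Ioi i).card) := by
      rw [← Finset.prod_pow_eq_pow_sum]
      apply Finset.prod_congr rfl
      intro i hi
      rw [Finset.mem_filter] at hi
      simp [hi.2]
    rw [h1, h2, one_mul]
  -- combine everything
  have hs : intSignHom ((Equiv.Perm.sign σ : ℤ)) = (Equiv.Perm.sign σ : ℤ) := by
    rcases Int.units_eq_one_or (Equiv.Perm.sign σ) with h | h <;> rw [h] <;> rfl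
  have heq : (-1 : ℤ) ^ (∑ i : Fin m, (Finset.Ioi i).card)
      = (Equiv.Perm.sign σ : ℤ)
        * (-1 : ℤ) ^ (∑ i ∈ Finset.univ.filter (fun i => i ∉ T), (Finset.Ioi i).card) := by
    rw [← L, key, map_mul, hs, R]
  have hsplit : (∑ i : Fin m, (Finset.Ioi i).card)
      = (∑ i ∈ Finset.univ.filter (fun i => i ∈ T), (Finset.Ioi i).card)
        + (∑ i ∈ Finset.univ.filter (fun i => i ∉ T), (Finset.Ioi i).card) :=
    (Finset.sum_filter_add_sum_filter_not _ _ _).symm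
  rw [hsplit, pow_add] at heq
  have hne : ((-1 : ℤ) ^ (∑ i ∈ Finset.univ.filter (fun i => i ∉ T), (Finset.Ioi i).card)) ≠ 0 :=
    pow_ne_zero _ (by norm_num)
  have main : (Equiv.Perm.sign σ : ℤ)
      = (-1 : ℤ) ^ (∑ i ∈ Finset.univ.filter (fun i => i ∈ T), (Finset.Ioi i).card) :=
    (mul_right_cancel₀ hne heq.symm)
  -- compute the exponent
  have hexp : (∑ i ∈ Finset.univ.filter (fun i => i ∈ T), (Finset.Ioi i).card)
      = ∑ s ∈ S, (s : ℕ) := by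
    have hfilter : Finset.univ.filter (fun i => i ∈ T) = T := by
      ext i; simp
    rw [hfilter, hT]
    rw [Finset.sum_image (fun a _ b _ h => Fin.rev_injective h)]
    apply Finset.sum_congr rfl
    intro s _
    rw [Fin.card_Ioi, Fin.val_rev]
    have := s.isLt
    omega
  have hfin : ((Equiv.Perm.sign σ : ℤˣ) : ℤ) = (-1 : ℤ) ^ (S.card + ∑ s ∈ S, ((s : ℕ) + 1)) := by
    rw [main, hexp]
    have hE : S.card + ∑ s ∈ S, ((s : ℕ) + 1) = (∑ s ∈ S, (s : ℕ)) + 2 * S.card := by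
      rw [Finset.sum_add_distrib, Finset.sum_const, smul_eq_mul, mul_one]
      ring
    rw [hE, pow_add, pow_mul]
    norm_num
  apply Units.ext
  rw [Units.val_pow_eq_pow_val]
  simpa using hfin
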